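/- There is no homogeneous polynomial F₇(z1,z2) of degree 8 with z2^2 * ∂F₇/∂z1 + z1^2 * ∂F₇/∂z2 = c * (z1 - z2)(z1^2 + z1*z2 + z2^2)(z1^6 - 11*z1^3*z2^3 + z2^6) for any nonzero constant c. Equivalently, R_h does not lie in the image of the Lie-derivative operator along X0 acting on degree-8 homogeneous polynomials. -/

import Mathlib

open MvPolynomial

namespace Stmt5Aux

lemma coeff_pderiv {σ : Type*} [DecidableEq σ] {R : Type*} [CommRing R]
    (i : σ) (m : σ →₀ ℕ) (F : MvPolynomial σ R) :
    coeff m (pderiv i F) = ((m i : R) + 1) * coeff (m + Finsupp.single i 1) F := by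
  induction F using MvPolynomial.induction_on' with
  | add p q hp hq => simp [hp, hq, mul_add]
  | monomial s a =>
    rw [pderiv_monomial, coeff_monomial, coeff_monomial]
    by_cases h : s = m + Finsupp.single i 1
    · subst h
      rw [if_pos (add_tsub_cancel_right _ _), if_pos rfl]
      push_cast
      simp [mul_comm]
    · rw [if_neg h]
      by_cases h2 : s - Finsupp.single i 1 = m
      · rw [if_pos h2]
        have hsi : s i = 0 := by
          by_contra hs
          exact h (by rw [← h2, tsub_add_cancel_of_le (by
            simpa [Finsupp.single_le_iff, Nat.one_le_iff_ne_zero] using hs)])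
        simp [hsi]
      · rw [if_neg h2]; ring

noncomputable def sgl (a b : ℕ) : Fin 2 →₀ ℕ := Finsupp.single 0 a + Finsupp.single 1 b

lemma sgl_apply0 (a b : ℕ) : sgl a b 0 = a := by simp [sgl]
lemma sgl_apply1 (a b : ℕ) : sgl a b 1 = b := by simp [sgl, Finsupp.single_apply]
lemma sgl_sub1 (a b : ℕ) : sgl a b - Finsupp.single 1 1 = sgl a (b - 1) := by
  ext x; fin_cases x <;> simp [sgl, Finsupp.single_apply]
lemma sgl_sub0 (a b : ℕ) : sgl a b - Finsupp.single 0 1 = sgl (a - 1) b := by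
  ext x; fin_cases x <;> simp [sgl, Finsupp.single_apply]
lemma sgl_add0 (a b : ℕ) : sgl a b + Finsupp.single 0 1 = sgl (a + 1) b := by
  ext x; fin_cases x <;> simp [sgl, Finsupp.single_apply]
lemma sgl_add1 (a b : ℕ) : sgl a b + Finsupp.single 1 1 = sgl a (b + 1) := by
  ext x; fin_cases x <;> simp [sgl, Finsupp.single_apply]
lemma sgl_inj {a b p q : ℕ} : sgl a b = sgl p q ↔ a = p ∧ b = q := by
  constructor
  · intro h
    exact ⟨by simpa [sgl_apply0] using DFunLike.congr_fun h 0,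
           by simpa [sgl_apply1] using DFunLike.congr_fun h 1⟩
  · rintro ⟨rfl, rfl⟩; rfl

lemma mem1 (a b : ℕ) : (1 : Fin 2) ∈ (sgl a b).support ↔ b ≠ 0 := by
  rw [Finsupp.mem_support_iff, sgl_apply1]
lemma mem0 (a b : ℕ) : (0 : Fin 2) ∈ (sgl a b).support ↔ a ≠ 0 := by
  rw [Finsupp.mem_support_iff, sgl_apply0]

lemma L1 (a b : ℕ) (F : MvPolynomial (Fin 2) ℝ) :
    coeff (sgl a b) (X 1 ^ 2 * pderiv 0 F) =
      if 2 ≤ b then ((a : ℝ) + 1) * coeff (sgl (a+1) (b-2)) F else 0 := by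
  rw [pow_two, mul_assoc, coeff_X_mul', coeff_X_mul']
  by_cases hb : 2 ≤ b
  · rw [if_pos hb]
    rw [if_pos ((mem1 a b).2 (by omega)), sgl_sub1,
        if_pos ((mem1 a (b-1)).2 (by omega)), sgl_sub1,
        show b - 1 - 1 = b - 2 from by omega,
        coeff_pderiv, sgl_add0, sgl_apply0]
  · rw [if_neg hb]
    by_cases hb0 : b = 0
    · rw [if_neg (by rw [mem1]; omega)]
    · rw [if_pos ((mem1 a b).2 (by omega)), sgl_sub1,
          if_neg (by rw [mem1]; omega)]

lemma L2 (a b : ℕ) (F : MvPolynomial (Fin 2) ℝ) :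
    coeff (sgl a b) (X 0 ^ 2 * pderiv 1 F) =
      if 2 ≤ a then ((b : ℝ) + 1) * coeff (sgl (a-2) (b+1)) F else 0 := by
  rw [pow_two, mul_assoc, coeff_X_mul', coeff_X_mul']
  by_cases ha : 2 ≤ a
  · rw [if_pos ha]
    rw [if_pos ((mem0 a b).2 (by omega)), sgl_sub0,
        if_pos ((mem0 (a-1) b).2 (by omega)), sgl_sub0,
        show a - 1 - 1 = a - 2 from by omega,
        coeff_pderiv, sgl_add1, sgl_apply1]
  · rw [if_neg ha]
    by_cases ha0 : a = 0
    · rw [if_neg (by rw [mem0]; omega)]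
    · rw [if_pos ((mem0 a b).2 (by omega)), sgl_sub0,
          if_neg (by rw [mem0]; omega)]

lemma coeff_mono (a b p q : ℕ) :
    coeff (sgl a b) ((X 0 : MvPolynomial (Fin 2) ℝ) ^ p * X 1 ^ q) =
      if a = p ∧ b = q then 1 else 0 := by
  rw [X_pow_eq_monomial, X_pow_eq_monomial, monomial_mul, mul_one, coeff_monomial]
  have e : (Finsupp.single (0 : Fin 2) p + Finsupp.single 1 q) = sgl p q := rfl
  rw [e]
  by_cases h : a = p ∧ b = q
  · obtain ⟨rfl, rfl⟩ := h
    rw [if_pos rfl, if_pos ⟨rfl, rfl⟩]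
  · rw [if_neg h, if_neg (fun hh => h ⟨(sgl_inj.1 hh).1.symm, (sgl_inj.1 hh).2.symm⟩)]

end Stmt5Aux
theorem stmt5 :
    ¬ ∃ (F : MvPolynomial (Fin 2) ℝ) (c : ℝ), F.IsHomogeneous 8 ∧ c ≠ 0 ∧
      X 1 ^ 2 * pderiv 0 F + X 0 ^ 2 * pderiv 1 F =
        c • ((X 0 - X 1) * (X 0 ^ 2 + X 0 * X 1 + X 1 ^ 2)
          * (X 0 ^ 6 - 11 * X 0 ^ 3 * X 1 ^ 3 + X 1 ^ 6)) := by
  rintro ⟨F, c, -, hc, heq⟩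
  have hbig : ((X 0 - X 1) * (X 0 ^ 2 + X 0 * X 1 + X 1 ^ 2)
      * (X 0 ^ 6 - 11 * X 0 ^ 3 * X 1 ^ 3 + X 1 ^ 6) : MvPolynomial (Fin 2) ℝ) =
      X 0 ^ 9 * X 1 ^ 0 - C 12 * (X 0 ^ 6 * X 1 ^ 3) + C 12 * (X 0 ^ 3 * X 1 ^ 6)
        - X 0 ^ 0 * X 1 ^ 9 := by
    simp only [map_ofNat]
    ring
  rw [hbig] at heq
  have key : ∀ a b : ℕ, coeff (Stmt5Aux.sgl a b) (X 1 ^ 2 * pderiv 0 F + X 0 ^ 2 * pderiv 1 F)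
      = c * coeff (Stmt5Aux.sgl a b) (X 0 ^ 9 * X 1 ^ 0 - C 12 * (X 0 ^ 6 * X 1 ^ 3)
          + C 12 * (X 0 ^ 3 * X 1 ^ 6) - X 0 ^ 0 * X 1 ^ 9) := by
    intro a b; rw [heq, coeff_smul, smul_eq_mul]
  have h90 := key 9 0
  have h09 := key 0 9
  have h63 := key 6 3
  have h36 := key 3 6
  simp only [coeff_add, coeff_sub, coeff_C_mul, Stmt5Aux.L1, Stmt5Aux.L2,
    Stmt5Aux.coeff_mono] at h90 h09 h63 h36
  norm_num at h90 h09 h63 h36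
  apply hc
  linarith
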